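/- Let G = ([n], E) be a finite connected undirected graph and for x ∈ ℝⁿ with x ≠ 0 and median(x) = 0 define ψ(x) = (∑_{(i,j)∈E} |x_i - x_j|) / (∑_i |x_i|). Then the conductance φ(G) = min_{∅ ⊂ S ⊂ [n], |S| ≤ n/2} e(S, S̄)/|S| satisfies φ(G) = min over all such x of ψ(x). -/

import Mathlib

open Finset


lemma ind_sum (n : ℕ) (G : SimpleGraph (Fin n)) [DecidableRel G.Adj] (S : Finset (Fin n)) :
    (∑ i, ∑ j, if G.Adj i j then |(if i ∈ S then (1:ℝ) else 0) - (if j ∈ S then (1:ℝ) else 0)| else 0)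
      = 2 * ∑ i ∈ S, ∑ j ∈ Sᶜ, if G.Adj i j then (1:ℝ) else 0 := by
  have split : ∀ F : Fin n → Fin n → ℝ,
      (∑ i, ∑ j, F i j) = ((∑ i ∈ S, ∑ j ∈ S, F i j) + (∑ i ∈ S, ∑ j ∈ Sᶜ, F i j))
        + ((∑ i ∈ Sᶜ, ∑ j ∈ S, F i j) + ∑ i ∈ Sᶜ, ∑ j ∈ Sᶜ, F i j) := by
    intro F
    rw [← Finset.sum_add_sum_compl S (fun i => ∑ j, F i j), ← Finset.sum_add_distrib,
      ← Finset.sum_add_distrib]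
    congr 1 <;> exact Finset.sum_congr rfl fun i _ => (Finset.sum_add_sum_compl S (F i)).symm
  rw [split]
  have h1 : (∑ i ∈ S, ∑ j ∈ S, if G.Adj i j then |(if i ∈ S then (1:ℝ) else 0) - (if j ∈ S then (1:ℝ) else 0)| else 0) = 0 := by
    apply Finset.sum_eq_zero; intro i hi
    apply Finset.sum_eq_zero; intro j hj
    simp [hi, hj]
  have h2 : (∑ i ∈ Sᶜ, ∑ j ∈ Sᶜ, if G.Adj i j then |(if i ∈ S then (1:ℝ) else 0) - (if j ∈ S then (1:ℝ) else 0)| else 0) = 0 := by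
    apply Finset.sum_eq_zero; intro i hi
    apply Finset.sum_eq_zero; intro j hj
    rw [Finset.mem_compl] at hi hj
    simp [hi, hj]
  have h3 : (∑ i ∈ S, ∑ j ∈ Sᶜ, if G.Adj i j then |(if i ∈ S then (1:ℝ) else 0) - (if j ∈ S then (1:ℝ) else 0)| else 0)
      = ∑ i ∈ S, ∑ j ∈ Sᶜ, if G.Adj i j then (1:ℝ) else 0 := by
    apply Finset.sum_congr rfl; intro i hi
    apply Finset.sum_congr rfl; intro j hj
    rw [Finset.mem_compl] at hj
    simp [hi, hj]
  have h4 : (∑ i ∈ Sᶜ, ∑ j ∈ S, if G.Adj i j then |(if i ∈ S then (1:ℝ) else 0) - (if j ∈ S then (1:ℝ) else 0)| else 0)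
      = ∑ i ∈ S, ∑ j ∈ Sᶜ, if G.Adj i j then (1:ℝ) else 0 := by
    rw [Finset.sum_comm]
    apply Finset.sum_congr rfl; intro i hi
    apply Finset.sum_congr rfl; intro j hj
    rw [Finset.mem_compl] at hj
    simp [hi, hj, G.adj_comm]
  rw [h1, h2, h3, h4]; ring

lemma key (n : ℕ) (G : SimpleGraph (Fin n)) [DecidableRel G.Adj] (φ : ℝ)
    (hφ : ∀ S : Finset (Fin n), S.Nonempty → 2 * S.card ≤ n →
      φ * S.card ≤ ∑ i ∈ S, ∑ j ∈ Sᶜ, if G.Adj i j then (1:ℝ) else 0) :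
    ∀ k : ℕ, ∀ y : Fin n → ℝ, (∀ i, 0 ≤ y i) →
      (univ.filter fun i => y i ≠ 0).card ≤ k →
      2 * (univ.filter fun i => y i ≠ 0).card ≤ n →
      2 * φ * ∑ i, y i ≤ ∑ i, ∑ j, if G.Adj i j then |y i - y j| else 0 := by
  intro k
  induction k with
  | zero =>
    intro y hy hk _
    have hz : ∀ i, y i = 0 := by
      intro i; by_contra h
      have hm : i ∈ univ.filter fun i => y i ≠ 0 := by simp [h]
      have := Finset.card_pos.mpr ⟨i, hm⟩; omega
    simp [hz]
  | succ k ih =>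
    intro y hy hk hn
    by_cases hS : (univ.filter fun i => y i ≠ 0).Nonempty
    · set S := univ.filter fun i => y i ≠ 0 with hSdef
      set m := S.inf' hS y with hmdef
      obtain ⟨i₀, hi₀S, hi₀⟩ := Finset.exists_mem_eq_inf' hS y
      have hzero : ∀ i, i ∉ S → y i = 0 := by
        intro i hi; by_contra h; exact hi (by simp [hSdef, h])
      have hmy : m = y i₀ := hmdef.trans hi₀
      have hm0 : 0 < m := by
        have h : y i₀ ≠ 0 := by
          have := hi₀S; rw [hSdef, Finset.mem_filter] at this; exact this.2
        rw [hmy]; exact lt_of_le_of_ne (hy i₀) (Ne.symm h)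
      set z : Fin n → ℝ := fun i => if i ∈ S then (1:ℝ) else 0 with hzdef
      set y' : Fin n → ℝ := fun i => y i - m * z i with hy'def
      have hle : ∀ i, i ∈ S → m ≤ y i := fun i hi => Finset.inf'_le y hi
      have hy' : ∀ i, 0 ≤ y' i := by
        intro i; by_cases hi : i ∈ S
        · simp only [hy'def, hzdef, hi, if_pos, mul_one]; linarith [hle i hi]
        · simp only [hy'def, hzdef, hi, if_neg, mul_zero, if_false]
          simpa using hy i
      have hpt : ∀ i j, |y i - y j| = m * |z i - z j| + |y' i - y' j| := by
        intro i j
        by_cases hi : i ∈ S <;> by_cases hj : j ∈ S <;>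
          simp only [hy'def, hzdef, hi, hj, if_pos, if_false, mul_one, mul_zero, sub_zero]
        · rw [show y i - m - (y j - m) = y i - y j by ring]; simp
        · rw [hzero j hj]
          rw [abs_of_nonneg (by linarith [hy i] : (0:ℝ) ≤ y i - 0)]
          rw [abs_one, abs_of_nonneg (show (0:ℝ) ≤ y i - m - 0 by linarith [hle i hi])]
          ring
        · rw [hzero i hi]
          rw [abs_of_nonpos (by linarith [hy j] : (0:ℝ) - y j ≤ 0)]
          rw [show |(0:ℝ) - 1| = 1 by norm_num,
            abs_of_nonpos (show (0:ℝ) - (y j - m) ≤ 0 by linarith [hle j hj])]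
          ring
        · rw [hzero i hi, hzero j hj]; simp
      have hsplit :
          (∑ i, ∑ j, if G.Adj i j then |y i - y j| else 0)
            = m * (∑ i, ∑ j, if G.Adj i j then |z i - z j| else 0)
              + (∑ i, ∑ j, if G.Adj i j then |y' i - y' j| else 0) := by
        rw [Finset.mul_sum, ← Finset.sum_add_distrib]
        apply Finset.sum_congr rfl; intro i _
        rw [Finset.mul_sum, ← Finset.sum_add_distrib]
        apply Finset.sum_congr rfl; intro j _
        split_ifs with h
        · exact hpt i j
        · simp
      have hzsum : (∑ i, ∑ j, if G.Adj i j then |z i - z j| else 0)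
          = 2 * ∑ i ∈ S, ∑ j ∈ Sᶜ, if G.Adj i j then (1:ℝ) else 0 :=
        ind_sum n G S
      have hScard : 2 * S.card ≤ n := hn
      have hφS : φ * S.card ≤ ∑ i ∈ S, ∑ j ∈ Sᶜ, if G.Adj i j then (1:ℝ) else 0 :=
        hφ S hS hScard
      -- support of y'
      have hsub : (univ.filter fun i => y' i ≠ 0) ⊆ S.erase i₀ := by
        intro i hi
        rw [Finset.mem_filter] at hi
        have hiS : i ∈ S := by
          by_contra h
          apply hi.2
          simp only [hy'def, hzdef, h, if_false, mul_zero, sub_zero]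
          exact hzero i h
        rw [Finset.mem_erase]
        refine ⟨?_, hiS⟩
        rintro rfl
        apply hi.2
        simp only [hy'def, hzdef, hiS, if_pos, mul_one]
        linarith [hmy]
      have hcard' : (univ.filter fun i => y' i ≠ 0).card ≤ k := by
        have h1 := Finset.card_le_card hsub
        have h2 := Finset.card_erase_of_mem hi₀S
        have h3 := Finset.card_pos.mpr ⟨i₀, hi₀S⟩
        omega
      have hn' : 2 * (univ.filter fun i => y' i ≠ 0).card ≤ n := by
        have h1 := Finset.card_le_card hsub
        have h2 := Finset.card_erase_of_mem hi₀S
        omega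
      have ihy' := ih y' hy' hcard' hn'
      have hzsum' : ∑ i, z i = (S.card : ℝ) := by
        simp [hzdef, Finset.sum_ite_mem]
      have hysum : ∑ i, y i = m * S.card + ∑ i, y' i := by
        have : ∑ i, y' i = ∑ i, y i - m * ∑ i, z i := by
          simp only [hy'def]
          rw [Finset.sum_sub_distrib, Finset.mul_sum]
        rw [this, hzsum']; ring
      have hkey : 2 * φ * ∑ i, y i
          = 2 * (m * (φ * S.card)) + 2 * φ * ∑ i, y' i := by
        rw [hysum]; ring
      have h1 : m * (φ * S.card) ≤ m * ∑ i ∈ S, ∑ j ∈ Sᶜ, if G.Adj i j then (1:ℝ) else 0 :=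
        mul_le_mul_of_nonneg_left hφS hm0.le
      rw [hkey, hsplit, hzsum]
      linarith
    · have hcard : (univ.filter fun i => y i ≠ 0).card = 0 := by
        rw [Finset.not_nonempty_iff_eq_empty] at hS
        simp [hS]
      exact ih y hy (by omega) hn

/-- Variational (ℓ₁) characterization of conductance: the conductance of a connected graph
equals the minimum of `ψ(x) = (∑_{(i,j)∈E}|x_i-x_j|)/(∑_i |x_i|)` over nonzero vectors `x`
with median 0, and this minimum is attained. -/
theorem conductance_variational (n : ℕ) (hn : 2 ≤ n)
    (G : SimpleGraph (Fin n)) [DecidableRel G.Adj] (hconn : G.Connected) :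
    IsLeast
      { r : ℝ | ∃ x : Fin n → ℝ, x ≠ 0 ∧
          (n : ℝ) ≤ 2 * ((Finset.univ.filter fun i => x i ≤ 0).card : ℝ) ∧
          (n : ℝ) ≤ 2 * ((Finset.univ.filter fun i => 0 ≤ x i).card : ℝ) ∧
          r = (∑ i, ∑ j, if G.Adj i j then |x i - x j| else 0) / (2 * ∑ i, |x i|) }
      (sInf { r : ℝ | ∃ S : Finset (Fin n), S.Nonempty ∧ 2 * S.card ≤ n ∧
          r = (∑ i ∈ S, ∑ j ∈ Sᶜ, if G.Adj i j then (1 : ℝ) else 0) / (S.card : ℝ) }) := by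
  set C : Set ℝ := { r : ℝ | ∃ S : Finset (Fin n), S.Nonempty ∧ 2 * S.card ≤ n ∧
      r = (∑ i ∈ S, ∑ j ∈ Sᶜ, if G.Adj i j then (1 : ℝ) else 0) / (S.card : ℝ) } with hCdef
  have hne : C.Nonempty := by
    refine ⟨_, ⟨{(⟨0, by omega⟩ : Fin n)}, Finset.singleton_nonempty _, by simp; omega, rfl⟩⟩
  have hfin : C.Finite := by
    apply Set.Finite.subset (Set.finite_range
      (fun S : Finset (Fin n) =>
        (∑ i ∈ S, ∑ j ∈ Sᶜ, if G.Adj i j then (1 : ℝ) else 0) / (S.card : ℝ)))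
    rintro r ⟨S, -, -, rfl⟩
    exact ⟨S, rfl⟩
  have hbdd : BddBelow C := by
    refine ⟨0, ?_⟩
    rintro r ⟨S, -, -, rfl⟩
    apply div_nonneg _ (by positivity)
    apply Finset.sum_nonneg; intro i _
    apply Finset.sum_nonneg; intro j _
    positivity
  set φ := sInf C with hφdef
  have hφle : ∀ S : Finset (Fin n), S.Nonempty → 2 * S.card ≤ n →
      φ * S.card ≤ ∑ i ∈ S, ∑ j ∈ Sᶜ, if G.Adj i j then (1:ℝ) else 0 := by
    intro S hS hSc
    have hmem : (∑ i ∈ S, ∑ j ∈ Sᶜ, if G.Adj i j then (1:ℝ) else 0) / (S.card : ℝ) ∈ C :=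
      ⟨S, hS, hSc, rfl⟩
    have h := csInf_le hbdd hmem
    have hc : (0:ℝ) < S.card := by exact_mod_cast Finset.card_pos.mpr hS
    rw [le_div_iff₀ hc] at h
    exact h
  constructor
  · -- membership: φ is attained by an indicator vector
    obtain ⟨S₀, hS₀ne, hS₀c, hS₀r⟩ := hne.csInf_mem hfin
    obtain ⟨i₀, hi₀⟩ := hS₀ne
    refine ⟨fun i => if i ∈ S₀ then (1:ℝ) else 0, ?_, ?_, ?_, ?_⟩
    · intro h
      have := congrFun h i₀
      simp [hi₀] at this
    · have hfe : (univ.filter fun i => (if i ∈ S₀ then (1:ℝ) else 0) ≤ 0) = S₀ᶜ := by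
        ext i; by_cases hi : i ∈ S₀ <;> simp [hi]
      rw [hfe, Finset.card_compl, Fintype.card_fin]
      have h1 : S₀.card ≤ n := by
        have h := Finset.card_le_univ S₀
        rwa [Fintype.card_fin] at h
      have h2 : n ≤ 2 * (n - S₀.card) := by omega
      exact_mod_cast h2
    · have hfe : (univ.filter fun i => (0:ℝ) ≤ (if i ∈ S₀ then (1:ℝ) else 0)) = univ := by
        ext i; by_cases hi : i ∈ S₀ <;> simp [hi]
      rw [hfe, Finset.card_univ, Fintype.card_fin]
      have : (0:ℝ) ≤ n := by positivity
      linarith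
    · rw [ind_sum n G S₀]
      have habs : ∀ i, |if i ∈ S₀ then (1:ℝ) else 0| = if i ∈ S₀ then (1:ℝ) else 0 := by
        intro i; by_cases hi : i ∈ S₀ <;> simp [hi]
      have hsum : (∑ i, |if i ∈ S₀ then (1:ℝ) else 0|) = (S₀.card : ℝ) := by
        simp only [habs]
        simp [Finset.sum_ite_mem]
      rw [hsum, hφdef, hS₀r, mul_div_mul_left _ _ (two_ne_zero : (2:ℝ) ≠ 0)]
  · -- lower bound
    rintro r ⟨x, hx0, hmed1, hmed2, rfl⟩
    set p : Fin n → ℝ := fun i => max (x i) 0 with hpdef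
    set q : Fin n → ℝ := fun i => max (-x i) 0 with hqdef
    have hp0 : ∀ i, 0 ≤ p i := fun i => le_max_right _ _
    have hq0 : ∀ i, 0 ≤ q i := fun i => le_max_right _ _
    have habs : ∀ i, |x i| = p i + q i := by
      intro i
      rcases le_total 0 (x i) with h | h
      · rw [abs_of_nonneg h]
        simp only [hpdef, hqdef]
        rw [max_eq_left h, max_eq_right (by linarith)]
        ring
      · rw [abs_of_nonpos h]
        simp only [hpdef, hqdef]
        rw [max_eq_right h, max_eq_left (by linarith)]
        ring
    have hptw : ∀ i j, |x i - x j| = |p i - p j| + |q i - q j| := by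
      intro i j
      rcases le_total 0 (x i) with hi | hi <;> rcases le_total 0 (x j) with hj | hj <;>
        simp only [hpdef, hqdef]
      · rw [max_eq_left hi, max_eq_left hj, max_eq_right (by linarith : -x i ≤ 0),
          max_eq_right (by linarith : -x j ≤ 0)]
        simp
      · rw [max_eq_left hi, max_eq_right (by linarith : x j ≤ 0),
          max_eq_right (by linarith : -x i ≤ 0), max_eq_left (by linarith : 0 ≤ -x j)]
        rw [abs_of_nonneg (by linarith : (0:ℝ) ≤ x i - x j),
          abs_of_nonneg (by linarith : (0:ℝ) ≤ x i - 0),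
          abs_of_nonpos (by linarith : (0:ℝ) - -x j ≤ 0)]
        ring
      · rw [max_eq_right (by linarith : x i ≤ 0), max_eq_left hj,
          max_eq_left (by linarith : 0 ≤ -x i), max_eq_right (by linarith : -x j ≤ 0)]
        rw [abs_of_nonpos (by linarith : x i - x j ≤ 0),
          abs_of_nonpos (by linarith : (0:ℝ) - x j ≤ 0),
          abs_of_nonneg (by linarith : (0:ℝ) ≤ -x i - 0)]
        ring
      · rw [max_eq_right (by linarith : x i ≤ 0), max_eq_right (by linarith : x j ≤ 0),
          max_eq_left (by linarith : 0 ≤ -x i), max_eq_left (by linarith : 0 ≤ -x j)]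
        rw [show -x i - -x j = -(x i - x j) by ring, abs_neg]
        simp
    have hEsplit : (∑ i, ∑ j, if G.Adj i j then |x i - x j| else 0)
        = (∑ i, ∑ j, if G.Adj i j then |p i - p j| else 0)
          + (∑ i, ∑ j, if G.Adj i j then |q i - q j| else 0) := by
      rw [← Finset.sum_add_distrib]
      apply Finset.sum_congr rfl; intro i _
      rw [← Finset.sum_add_distrib]
      apply Finset.sum_congr rfl; intro j _
      split_ifs with h
      · exact hptw i j
      · simp
    -- support bounds
    have hcmed1 : n ≤ 2 * (univ.filter fun i => x i ≤ 0).card := by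
      exact_mod_cast hmed1
    have hcmed2 : n ≤ 2 * (univ.filter fun i => 0 ≤ x i).card := by
      exact_mod_cast hmed2
    have hsupp_p : (univ.filter fun i => p i ≠ 0) = (univ.filter fun i => x i ≤ 0)ᶜ := by
      ext i
      simp only [Finset.mem_filter, Finset.mem_compl, Finset.mem_univ, true_and, hpdef]
      constructor
      · intro h hle
        exact h (max_eq_right hle)
      · intro h
        push_neg at h
        rw [max_eq_left h.le]
        exact ne_of_gt h
    have hsupp_q : (univ.filter fun i => q i ≠ 0) = (univ.filter fun i => 0 ≤ x i)ᶜ := by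
      ext i
      simp only [Finset.mem_filter, Finset.mem_compl, Finset.mem_univ, true_and, hqdef]
      constructor
      · intro h hle
        exact h (max_eq_right (by linarith))
      · intro h
        push_neg at h
        rw [max_eq_left (by linarith)]
        intro hc
        apply absurd h
        simp
        linarith
    have hcard_p : 2 * (univ.filter fun i => p i ≠ 0).card ≤ n := by
      rw [hsupp_p, Finset.card_compl, Fintype.card_fin]
      have h := Finset.card_le_univ (univ.filter fun i => x i ≤ 0)
      rw [Fintype.card_fin] at h
      omega
    have hcard_q : 2 * (univ.filter fun i => q i ≠ 0).card ≤ n := by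
      rw [hsupp_q, Finset.card_compl, Fintype.card_fin]
      have h := Finset.card_le_univ (univ.filter fun i => 0 ≤ x i)
      rw [Fintype.card_fin] at h
      omega
    have hkp := key n G φ hφle _ p hp0 le_rfl hcard_p
    have hkq := key n G φ hφle _ q hq0 le_rfl hcard_q
    have hsum_abs : ∑ i, |x i| = ∑ i, p i + ∑ i, q i := by
      rw [← Finset.sum_add_distrib]
      exact Finset.sum_congr rfl fun i _ => habs i
    have hpos : 0 < ∑ i, |x i| := by
      have hex : ∃ i, x i ≠ 0 := by
        by_contra h
        push_neg at h
        exact hx0 (funext h)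
      obtain ⟨i, hi⟩ := hex
      apply Finset.sum_pos' (fun j _ => abs_nonneg _)
      exact ⟨i, Finset.mem_univ i, abs_pos.mpr hi⟩
    rw [le_div_iff₀ (by linarith : (0:ℝ) < 2 * ∑ i, |x i|)]
    rw [hEsplit]
    have : φ * (2 * ∑ i, |x i|) = 2 * φ * ∑ i, p i + 2 * φ * ∑ i, q i := by
      rw [hsum_abs]; ring
    rw [this]
    exact add_le_add hkp hkq
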